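/- Let G be an infinite countable amenable group, T a finite tiling of G with shapes containing e_G, X_T the associated subshift over the alphabet S(T) ∪ {0} generated by the point x with x_g = S₀ if g ∈ C(S₀) and x_g = 0 otherwise. Then T is irreducible if and only if for every y ∈ X_T and every shape S₀ of T there exists g ∈ G with y_g = S₀. -/

import Mathlib

open Filter Topology Pointwise ENNReal

/-- A Følner sequence for a group `G`. -/
def IsFolnerSeq (G : Type*) [Group G] (F : ℕ → Finset G) : Prop :=
  (∀ n, (F n).Nonempty) ∧
    ∀ g : G, Filter.Tendsto
      (fun n => ((symmDiff (g • ((F n) : Set G)) ((F n) : Set G)).ncard : ℝ) / (F n).card)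
      Filter.atTop (nhds 0)

/-- A group is amenable if it admits a Følner sequence. -/
def IsAmenable (G : Type*) [Group G] : Prop := ∃ F : ℕ → Finset G, IsFolnerSeq G F

variable {G : Type*} [Group G]

/-- The `K`-boundary of a finite set `A`. -/
def kBoundary (A K : Finset G) : Set G :=
  {g : G | (∃ k ∈ K, k * g ∈ A) ∧ ∃ k ∈ K, k * g ∉ A}

/-- `A` is `(K, δ)`-invariant. -/
def InvariantSet (A K : Finset G) (δ : ℝ) : Prop :=
  ((kBoundary A K).ncard : ℝ) < δ * A.card

/-- A subset of a group is syndetic if finitely many translates cover the group. -/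
def Syndetic (A : Set G) : Prop := ∃ F : Finset G, (F : Set G) * A = Set.univ

/-- A finite tiling of a group `G`: a partition of `G` into right translates of
finitely many finite shapes, each shape containing the identity. -/
structure FiniteTiling (G : Type*) [Group G] where
  tiles : Set (Set G)
  shapes : Finset (Finset G)
  covers : ∀ g : G, ∃! t, t ∈ tiles ∧ g ∈ t
  tile_shape : ∀ t ∈ tiles, ∃ S ∈ shapes, ∃ c : G, t = (S : Set G) * {c}
  one_mem_shape : ∀ S ∈ shapes, (1 : G) ∈ S

/-- The set of centers of a shape `S` in a tiling. -/
def FiniteTiling.center (T : FiniteTiling G) (S : Finset G) : Set G :=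
  {c : G | ((S : Set G) * {c}) ∈ T.tiles}

/-- A finite tiling is irreducible if every sufficiently invariant finite set
contains a tile of every shape. -/
def FiniteTiling.IsIrreducible (T : FiniteTiling G) : Prop :=
  ∃ (T₀ : Finset G) (ε : ℝ), 0 < ε ∧
    ∀ F : Finset G, InvariantSet F T₀ ε →
      ∀ S ∈ T.shapes, ∃ c ∈ T.center S, (S : Set G) * {c} ⊆ (F : Set G)

/-- The shift action of `G` on `A^G`: `(c • x) g = x (g * c)`. -/
def shiftAct {A : Type*} (c : G) (x : G → A) : G → A := fun g => x (g * c)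

instance : TopologicalSpace (Option (Finset G)) := ⊥

open Classical in
/-- The point of `(S(T) ∪ {0})^G` encoding the centers of a tiling. -/
noncomputable def FiniteTiling.point (T : FiniteTiling G) : G → Option (Finset G) :=
  fun g => if h : ∃ S, S ∈ T.shapes ∧ g ∈ T.center S then some h.choose else none

/-- The subshift associated with a finite tiling: the orbit closure of `T.point`. -/
noncomputable def FiniteTiling.subshift (T : FiniteTiling G) : Set (G → Option (Finset G)) :=
  closure (Set.range fun c : G => shiftAct c T.point)

/-- `T₂` is primely congruent with `T₁`: tiles of `T₂` are unions of tiles of `T₁`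
and each shape of `T₂` has a unique master partition by tiles of `T₁`. -/
def PrimelyCongruent (T₁ T₂ : FiniteTiling G) : Prop :=
  (∀ t₁ ∈ T₁.tiles, ∀ t₂ ∈ T₂.tiles, (t₁ ∩ t₂).Nonempty → t₁ ⊆ t₂) ∧
  ∀ S ∈ T₂.shapes, ∀ c c' : G, c ∈ T₂.center S → c' ∈ T₂.center S →
    {u : Set G | ∃ t ∈ T₁.tiles, t ⊆ (S : Set G) * {c} ∧ u = t * {c⁻¹}} =
    {u : Set G | ∃ t ∈ T₁.tiles, t ⊆ (S : Set G) * {c'} ∧ u = t * {c'⁻¹}}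

/-- Number of patterns of a subshift on a finite window `F`. -/
noncomputable def patternCount {A : Type*} (X : Set (G → A)) (F : Finset G) : ℕ :=
  {p : ↑F → A | ∃ x ∈ X, ∀ g : ↑F, x (g : G) = p g}.ncard

section Dim

variable {Y : Type*} [TopologicalSpace Y]

/-- `β` is a finite open cover of the set `X`. -/
def IsOpenCoverOf (X : Set Y) (β : Finset (Set Y)) : Prop :=
  (∀ U ∈ β, IsOpen U) ∧ X ⊆ ⋃ U ∈ β, U

/-- The order of a finite cover on a set `X`. -/
noncomputable def ordOn (X : Set Y) (β : Finset (Set Y)) : ℕ :=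
  ⨆ y : X, ({U : Set Y | U ∈ β ∧ (y : Y) ∈ U}.ncard - 1)

/-- `D(α)`: minimal order among finite open covers of `X` refining `α`. -/
noncomputable def Dcov (X : Set Y) (α : Finset (Set Y)) : ℕ :=
  sInf {n | ∃ β : Finset (Set Y), IsOpenCoverOf X β ∧
    (∀ U ∈ β, ∃ V ∈ α, U ⊆ V) ∧ ordOn X β = n}

/-- The topological (covering) dimension of a subset `X` of a topological space. -/
noncomputable def topDim (X : Set Y) : ℕ∞ :=
  ⨆ α ∈ {α : Finset (Set Y) | IsOpenCoverOf X α}, (Dcov X α : ℕ∞)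

/-- The join `⋁_{g ∈ F} (σ g)⁻¹ α` of the pullbacks of a finite cover along an action. -/
noncomputable def FCover {H : Type*} (σ : H → Y → Y) (F : Finset H) (α : Finset (Set Y)) :
    Finset (Set Y) :=
  letI := Classical.decEq H
  letI := Classical.decEq (Set Y)
  (F.pi fun _ => α).image fun f => ⋂ g, ⋂ (h : g ∈ F), σ g ⁻¹' f g h

/-- Mean topological dimension of `X` with respect to an action `σ` of `G`,
computed along the Følner sequence `Fo`. -/
noncomputable def mdim {H : Type*} (σ : H → Y → Y) (X : Set Y) (Fo : ℕ → Finset H) : ℝ≥0∞ :=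
  ⨆ α ∈ {α : Finset (Set Y) | IsOpenCoverOf X α},
    Filter.limsup
      (fun n => (Dcov X (FCover σ (Fo n) α) : ℝ≥0∞) / ((Fo n).card : ℝ≥0∞))
      Filter.atTop

end Dim

/-- A polyhedron: a finite union of simplices (convex hulls of finite sets) in a
Euclidean space. -/
def IsPolyhedron {N : ℕ} (P : Set (EuclideanSpace ℝ (Fin N))) : Prop :=
  ∃ S : Finset (Finset (EuclideanSpace ℝ (Fin N))),
    P = ⋃ s ∈ S, convexHull ℝ (s : Set (EuclideanSpace ℝ (Fin N)))

/-- The upper (Banach) density of a subset of an amenable group. -/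
noncomputable def upperDensity (G : Type*) [Group G] (J : Set G) : ℝ :=
  sSup {r : ℝ | ∃ Fo : ℕ → Finset G, IsFolnerSeq G Fo ∧
    r = Filter.limsup (fun n => ((J ∩ (Fo n : Set G)).ncard : ℝ) / (Fo n).card) Filter.atTop}



section AuxLemmas

variable {G : Type*} [Group G]

instance : DiscreteTopology (Option (Finset G)) := ⟨rfl⟩

lemma kBoundary_finite (A K : Finset G) : (kBoundary A K).Finite := by
  have : kBoundary A K ⊆ ⋃ k ∈ (K : Set G), (fun g => k⁻¹ * g) '' (A : Set G) := by
    rintro g ⟨⟨k, hk, hkg⟩, -⟩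
    exact Set.mem_biUnion hk ⟨k * g, hkg, by group⟩
  exact (Set.Finite.biUnion K.finite_toSet fun k _ => A.finite_toSet.image _).subset this

lemma exists_deep_point {A K : Finset G} (h1 : (1 : G) ∈ K) (h : InvariantSet A K 1) :
    ∃ c : G, ∀ k ∈ K, k * c ∈ A := by
  unfold InvariantSet at h
  rw [one_mul] at h
  by_contra hc
  push_neg at hc
  have hsub : (A : Set G) ⊆ kBoundary A K := by
    intro g hg
    obtain ⟨k, hk, hkg⟩ := hc g
    exact ⟨⟨1, h1, by rwa [one_mul]⟩, ⟨k, hk, hkg⟩⟩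
  have := Set.ncard_le_ncard hsub (kBoundary_finite A K)
  rw [Set.ncard_coe_finset] at this
  have : (A.card : ℝ) ≤ ((kBoundary A K).ncard : ℝ) := by exact_mod_cast this
  linarith

section DecEq
variable [DecidableEq G]

lemma kBoundary_translate (A K : Finset G) (c : G) :
    kBoundary (A.image (· * c)) K = (· * c) '' kBoundary A K := by
  have key : ∀ k g : G, k * g ∈ A.image (· * c) ↔ k * (g * c⁻¹) ∈ A := by
    intro k g
    simp only [Finset.mem_image]
    constructor
    · rintro ⟨a, ha, h⟩
      have : a = k * (g * c⁻¹) := by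
        rw [← mul_assoc, ← h]; group
      rwa [← this]
    · intro h
      exact ⟨k * (g * c⁻¹), h, by group⟩
  ext g
  constructor
  · rintro ⟨⟨k, hk, hkg⟩, k', hk', hk'g⟩
    refine ⟨g * c⁻¹, ⟨⟨k, hk, ?_⟩, ⟨k', hk', ?_⟩⟩, by group⟩
    · exact (key k g).mp hkg
    · intro h; exact hk'g ((key k' g).mpr h)
  · rintro ⟨g₀, ⟨⟨k, hk, hkg⟩, k', hk', hk'g⟩, rfl⟩
    refine ⟨⟨k, hk, ?_⟩, ⟨k', hk', ?_⟩⟩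
    · rw [key]; simpa using hkg
    · rw [key]; simpa using hk'g

lemma InvariantSet.translate {A K : Finset G} {δ : ℝ} (h : InvariantSet A K δ) (c : G) :
    InvariantSet (A.image (· * c)) K δ := by
  unfold InvariantSet at h ⊢
  rw [kBoundary_translate, Set.ncard_image_of_injective _ (mul_left_injective c),
    Finset.card_image_of_injective _ (mul_left_injective c)]
  exact h

lemma kBoundary_card_le (A K : Finset G) :
    ((kBoundary A K).ncard : ℝ) ≤
      ∑ p ∈ K ×ˢ K, ((symmDiff ((p.1 * p.2⁻¹) • A) A : Finset G).card : ℝ) := by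
  set B : Finset G := (K ×ˢ K).biUnion (fun p => p.1⁻¹ • (symmDiff ((p.1 * p.2⁻¹) • A) A))
    with hB
  have hsub : kBoundary A K ⊆ (B : Set G) := by
    rintro g ⟨⟨k', hk', hk'g⟩, k, hk, hkg⟩
    have hmemD : k' * g ∈ symmDiff ((k' * k⁻¹) • A) A := by
      rw [Finset.mem_symmDiff]
      right
      refine ⟨hk'g, fun hmem => ?_⟩
      rw [Finset.mem_smul_finset] at hmem
      obtain ⟨y, hy, hy2⟩ := hmem
      apply hkg
      have hy3 : y = k * g := by
        have h2 := hy2; simp only [smul_eq_mul] at h2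
        have h3 : y = (k' * k⁻¹)⁻¹ * (k' * g) := by rw [← h2]; group
        rw [h3]; group
      rwa [hy3] at hy
    have : g ∈ (k'⁻¹ • (symmDiff ((k' * k⁻¹) • A) A) : Finset G) := by
      have := Finset.smul_mem_smul_finset (a := k'⁻¹) hmemD
      simpa using this
    exact Finset.mem_coe.mpr <| Finset.mem_biUnion.mpr
      ⟨(k', k), Finset.mem_product.mpr ⟨hk', hk⟩, this⟩
  have h1 : (kBoundary A K).ncard ≤ B.card := by
    have := Set.ncard_le_ncard hsub B.finite_toSet
    rwa [Set.ncard_coe_finset] at this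
  have h2 : B.card ≤ ∑ p ∈ K ×ˢ K, ((symmDiff ((p.1 * p.2⁻¹) • A) A : Finset G)).card := by
    refine (Finset.card_biUnion_le).trans ?_
    apply Finset.sum_le_sum
    intro p _
    rw [Finset.card_smul_finset]
  calc ((kBoundary A K).ncard : ℝ) ≤ (B.card : ℝ) := by exact_mod_cast h1
    _ ≤ _ := by exact_mod_cast h2

lemma exists_invariant {Fo : ℕ → Finset G} (hFo : IsFolnerSeq G Fo)
    (K : Finset G) {δ : ℝ} (hδ : 0 < δ) : ∃ n, InvariantSet (Fo n) K δ := by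
  have hterm : ∀ p ∈ K ×ˢ K, Tendsto
      (fun n => ((symmDiff ((p.1 * p.2⁻¹) • (Fo n)) (Fo n) : Finset G).card : ℝ) / (Fo n).card)
      atTop (nhds 0) := by
    intro p _
    have hset : ∀ n, ((symmDiff ((p.1 * p.2⁻¹) • (Fo n)) (Fo n) : Finset G).card : ℝ)
        = ((symmDiff ((p.1 * p.2⁻¹) • ((Fo n) : Set G)) ((Fo n) : Set G)).ncard : ℝ) := by
      intro n
      congr 1
      rw [← Set.ncard_coe_finset]
      congr 1
      rw [Finset.coe_symmDiff, Finset.coe_smul_finset]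
    simp only [hset]
    exact hFo.2 _
  have hsum : Tendsto (fun n => ∑ p ∈ K ×ˢ K,
      ((symmDiff ((p.1 * p.2⁻¹) • (Fo n)) (Fo n) : Finset G).card : ℝ) / (Fo n).card)
      atTop (nhds 0) := by
    have := tendsto_finset_sum (K ×ˢ K) hterm
    simpa using this
  have hev : ∀ᶠ n in atTop, (∑ p ∈ K ×ˢ K,
      ((symmDiff ((p.1 * p.2⁻¹) • (Fo n)) (Fo n) : Finset G).card : ℝ) / (Fo n).card) < δ :=
    hsum.eventually_lt_const hδ
  obtain ⟨n, hn⟩ := hev.exists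
  refine ⟨n, ?_⟩
  have hpos : (0 : ℝ) < (Fo n).card := by
    exact_mod_cast Finset.card_pos.mpr (hFo.1 n)
  have hb := kBoundary_card_le (Fo n) K
  rw [← Finset.sum_div] at hn
  have hlt := (div_lt_iff₀ hpos).mp hn
  unfold InvariantSet
  calc ((kBoundary (Fo n) K).ncard : ℝ) ≤ _ := hb
    _ < δ * (Fo n).card := hlt

end DecEq

lemma FiniteTiling.center_unique (T : FiniteTiling G) {S₁ S₂ : Finset G} {g : G}
    (h₁ : S₁ ∈ T.shapes) (h₂ : S₂ ∈ T.shapes) (hg₁ : g ∈ T.center S₁) (hg₂ : g ∈ T.center S₂) :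
    S₁ = S₂ := by
  have hmem₁ : g ∈ (S₁ : Set G) * {g} :=
    ⟨1, T.one_mem_shape S₁ h₁, g, rfl, one_mul g⟩
  have hmem₂ : g ∈ (S₂ : Set G) * {g} :=
    ⟨1, T.one_mem_shape S₂ h₂, g, rfl, one_mul g⟩
  obtain ⟨t, -, huniq⟩ := T.covers g
  have heq : (S₁ : Set G) * {g} = (S₂ : Set G) * {g} :=
    (huniq _ ⟨hg₁, hmem₁⟩).trans (huniq _ ⟨hg₂, hmem₂⟩).symm
  rw [Set.mul_singleton, Set.mul_singleton] at heq
  have := Set.image_injective.mpr (mul_left_injective g) heq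
  exact Finset.coe_injective this

lemma FiniteTiling.point_eq_some_iff (T : FiniteTiling G) {S : Finset G} (hS : S ∈ T.shapes)
    (g : G) : T.point g = some S ↔ g ∈ T.center S := by
  unfold FiniteTiling.point
  split
  · rename_i h
    have hsp := h.choose_spec
    constructor
    · intro he
      have : h.choose = S := by injection he
      rw [← this]; exact hsp.2
    · intro hg
      have : h.choose = S := T.center_unique hsp.1 hS hsp.2 hg
      rw [this]
  · rename_i h
    constructor
    · intro he; exact absurd he (by simp)
    · intro hg; exact absurd ⟨S, hS, hg⟩ h

open Classical in
lemma FiniteTiling.point_mem (T : FiniteTiling G) (g : G) :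
    T.point g ∈ (insert none (T.shapes.image some) : Finset (Option (Finset G))) := by
  unfold FiniteTiling.point
  split
  · rename_i h
    exact Finset.mem_insert_of_mem (Finset.mem_image_of_mem some h.choose_spec.1)
  · exact Finset.mem_insert_self _ _

lemma cylinder_isOpen (y : G → Option (Finset G)) (F : Finset G) :
    IsOpen {z : G → Option (Finset G) | ∀ g ∈ F, z g = y g} := by
  have : {z : G → Option (Finset G) | ∀ g ∈ F, z g = y g}
      = ⋂ g ∈ F, (fun z : G → Option (Finset G) => z g) ⁻¹' {y g} := by
    ext z; simp
  rw [this]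
  exact isOpen_biInter_finset fun g _ =>
    (continuous_apply g).isOpen_preimage _ (isOpen_discrete _)

lemma mem_subshift_agree {T : FiniteTiling G} {y : G → Option (Finset G)}
    (hy : y ∈ T.subshift) (F : Finset G) :
    ∃ c : G, ∀ g ∈ F, T.point (g * c) = y g := by
  have := mem_closure_iff.mp hy _ (cylinder_isOpen y F) (fun g _ => rfl)
  obtain ⟨z, hz1, c, rfl⟩ := this
  exact ⟨c, fun g hg => hz1 g hg⟩

end AuxLemmas

/-- A finite tiling is irreducible iff every point of the
associated subshift contains every shape symbol. -/
theorem irreducible_iff_every_shape_occurs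
    {G : Type*} [Group G] [Countable G] [Infinite G] (hG : IsAmenable G)
    (T : FiniteTiling G) :
    T.IsIrreducible ↔
      ∀ y ∈ T.subshift, ∀ S ∈ T.shapes, ∃ g : G, y g = some S := by
  classical
  obtain ⟨Fo, hFo⟩ := hG
  constructor
  · rintro ⟨T₀, ε, hε, hirr⟩ y hy S hS
    obtain ⟨n, hinv⟩ := exists_invariant hFo T₀ hε
    obtain ⟨c, hc⟩ := mem_subshift_agree hy (Fo n)
    have hinv' := hinv.translate c
    obtain ⟨c', hc'₁, hc'₂⟩ := hirr _ hinv' S hS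
    have hc'mem : c' ∈ (Fo n).image (· * c) := by
      have : c' ∈ (S : Set G) * {c'} := ⟨1, T.one_mem_shape S hS, c', rfl, one_mul c'⟩
      exact_mod_cast hc'₂ this
    obtain ⟨g, hg, hgc⟩ := Finset.mem_image.mp hc'mem
    refine ⟨g, ?_⟩
    rw [← hc g hg]
    show T.point (g * c) = some S
    rw [hgc]
    exact (T.point_eq_some_iff hS c').mpr hc'₁
  · intro hocc
    by_contra hnir
    unfold FiniteTiling.IsIrreducible at hnir
    push_neg at hnir
    obtain ⟨e, he⟩ := exists_surjective_nat G
    set W : ℕ → Finset G := fun n => (Finset.range (n + 1)).image e with hWdef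
    have hWmono : ∀ m n : ℕ, m ≤ n → W m ⊆ W n := by
      intro m n hmn
      exact Finset.image_subset_image (Finset.range_subset_range.mpr (by omega))
    have hWcov : ∀ g : G, ∃ m, g ∈ W m := by
      intro g
      obtain ⟨m, rfl⟩ := he g
      exact ⟨m, Finset.mem_image_of_mem e (Finset.mem_range.mpr (by omega))⟩
    have key : ∀ n : ℕ, ∃ (S : Finset G) (c : G), S ∈ T.shapes ∧
        ∀ g ∈ W n, T.point (g * c) ≠ some S := by
      intro n
      obtain ⟨F, hFinv, S, hS, hbad⟩ := hnir (insert 1 ((T.shapes.sup id) * W n)) 1 one_pos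
      obtain ⟨c, hcdeep⟩ := exists_deep_point (Finset.mem_insert_self 1 _) hFinv
      refine ⟨S, c, hS, ?_⟩
      intro g hg hcontra
      have hcen : g * c ∈ T.center S := (T.point_eq_some_iff hS _).mp hcontra
      apply hbad (g * c) hcen
      rintro x ⟨s, hs, x', hx', rfl⟩
      rw [Set.mem_singleton_iff] at hx'
      subst hx'
      show s * (g * c) ∈ (F : Set G)
      rw [← mul_assoc]
      have hsg : s * g ∈ insert 1 ((T.shapes.sup id) * W n) :=
        Finset.mem_insert_of_mem
          (Finset.mul_mem_mul ((Finset.le_sup (f := id) hS : S ⊆ _) hs) hg)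
      exact_mod_cast Finset.mem_coe.mpr (hcdeep _ hsg)
    choose Sf cf hSf hbadf using key
    have hpig : ∃ S, S ∈ T.shapes ∧ {n | Sf n = S}.Infinite := by
      by_contra hfin
      push_neg at hfin
      have hcover : (Set.univ : Set ℕ) ⊆ ⋃ S ∈ (T.shapes : Set (Finset G)), {n | Sf n = S} :=
        fun n _ => Set.mem_biUnion (hSf n) rfl
      have : (Set.univ : Set ℕ).Finite :=
        (Set.Finite.biUnion T.shapes.finite_toSet
          fun S hS => hfin S hS).subset hcover
      exact Set.infinite_univ this
    obtain ⟨S, hSsh, hSinf⟩ := hpig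
    have hL : (atTop ⊓ 𝓟 {n | Sf n = S}).NeBot :=
      frequently_iff_neBot.mp (Nat.frequently_atTop_iff_infinite.mpr hSinf)
    set L : Filter ℕ := atTop ⊓ 𝓟 {n | Sf n = S} with hLdef
    set z : ℕ → (G → Option (Finset G)) := fun n => shiftAct (cf n) T.point with hzdef
    set A : Finset (Option (Finset G)) := insert none (T.shapes.image some) with hAdef
    have hcomp : IsCompact (Set.pi Set.univ fun _ : G => (A : Set (Option (Finset G)))) :=
      isCompact_univ_pi fun _ => A.finite_toSet.isCompact
    have hzA : ∀ n, z n ∈ Set.pi Set.univ fun _ : G => (A : Set (Option (Finset G))) :=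
      fun n g _ => T.point_mem _
    have hle : map z L ≤ 𝓟 (Set.pi Set.univ fun _ : G => (A : Set (Option (Finset G)))) :=
      le_principal_iff.mpr (mem_map.mpr (Filter.Eventually.of_forall hzA))
    obtain ⟨y, -, hclus⟩ := hcomp.exists_clusterPt hle
    have hysub : y ∈ T.subshift := by
      have hle2 : map z L ≤ 𝓟 (Set.range fun c : G => shiftAct c T.point) :=
        le_principal_iff.mpr (mem_map.mpr (Filter.Eventually.of_forall fun n => ⟨cf n, rfl⟩))
      exact mem_closure_iff_clusterPt.mpr (hclus.mono hle2)
    obtain ⟨g, hg⟩ := hocc y hysub S hSsh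
    obtain ⟨m, hm⟩ := hWcov g
    have hev : ∀ᶠ n in L, z n ∈ {w : G → Option (Finset G) | w g ≠ some S} := by
      rw [hLdef, eventually_inf_principal]
      filter_upwards [eventually_ge_atTop m] with n hn hSn
      intro hzg
      apply hbadf n g (hWmono m n hn hm)
      rw [hSn]
      exact hzg
    have hcl : IsClosed {w : G → Option (Finset G) | w g ≠ some S} := by
      have hrw : {w : G → Option (Finset G) | w g ≠ some S}
          = (fun w : G → Option (Finset G) => w g) ⁻¹' ({some S}ᶜ) := rfl
      rw [hrw]
      exact (isClosed_discrete _).preimage (continuous_apply g)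
    have hyC : y ∈ {w : G → Option (Finset G) | w g ≠ some S} := by
      have := hclus.mono (le_principal_iff.mpr (mem_map.mpr hev))
      rw [← hcl.closure_eq]
      exact mem_closure_iff_clusterPt.mpr this
    exact hyC hg
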